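/- Assume the abstract reduced crossed product setup for an action α : Γ → Aut(A), with ambient C*-algebra B, unitaries (u_t), and conditional expectation E : B → A. Then the inclusion A ⊆ B has the relative Dixmier property (for every x ∈ B, the norm-closed convex hull in B of {v x v* : v a unitary element of A} intersects ℂ·1) if and only if A has the Dixmier property (for every a ∈ A, the norm-closed convex hull of {v a v* : v a unitary element of A} intersects ℂ·1) and the action α has (SAveP). -/

import Mathlib

/-- For a unital C*-subalgebra `A` of `B`, a map `f` on `A`, and `b ∈ B`, the norm-closed
convex hull in `B` of `{v * b * star (f v) : v a unitary element of A}`.  For `f = id`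
this is `C_A(b)`; for `f = β` an automorphism of `A` it is `C_A^β(b)`. -/
def relC {B : Type*} [NormedRing B] [StarRing B] [CStarRing B] [NormedAlgebra ℂ B]
    [CompleteSpace B] [StarModule ℂ B]
    (A : StarSubalgebra ℂ B) (f : ↥A → ↥A) (b : B) : Set B :=
  closure (convexHull ℝ
    {y : B | ∃ v : ↥A, v ∈ unitary ↥A ∧ y = (v : B) * b * star ((f v : ↥A) : B)})

set_option linter.unusedSectionVars false

section Aux
variable {B : Type*} [NormedRing B] [StarRing B] [CStarRing B] [NormedAlgebra ℂ B]
    [CompleteSpace B] [StarModule ℂ B]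

/-- Averaging operators coming from convex combinations of unitaries of `A`. -/
def IsAvg (A : StarSubalgebra ℂ B) (T : B → B) : Prop :=
  ∃ (ι : Type) (s : Finset ι) (w : ι → ℝ) (v : ι → ↥A),
    (∀ i ∈ s, 0 ≤ w i) ∧ (∑ i ∈ s, w i = 1) ∧ (∀ i ∈ s, v i ∈ unitary ↥A) ∧
    ∀ x : B, T x = ∑ i ∈ s, w i • ((v i : B) * x * star ((v i : B)))

variable {A : StarSubalgebra ℂ B}

lemma coe_mem_unitary {v : ↥A} (hv : v ∈ unitary ↥A) : (v : B) ∈ unitary B := by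
  rw [Unitary.mem_iff] at hv ⊢
  constructor
  · rw [← StarMemClass.coe_star, ← MulMemClass.coe_mul, hv.1, OneMemClass.coe_one]
  · rw [← StarMemClass.coe_star, ← MulMemClass.coe_mul, hv.2, OneMemClass.coe_one]

lemma real_smul_mem {x : B} (hx : x ∈ A) (r : ℝ) : r • x ∈ A := by
  have : r • x = ((r : ℂ)) • x := by
    rw [← smul_one_smul ℂ r x]
    norm_num
  rw [this]
  exact A.smul_mem hx _

lemma isAvg_id : IsAvg A id := by
  refine ⟨Unit, {Unit.unit}, fun _ => 1, fun _ => 1, by simp, by simp,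
    fun _ _ => one_mem _, fun x => by simp⟩


namespace IsAvg

variable {T S : B → B}

lemma map_add (hT : IsAvg A T) (x y : B) : T (x + y) = T x + T y := by
  obtain ⟨ι, s, w, v, hw0, hw1, hv, hf⟩ := hT
  simp only [hf, mul_add, add_mul, smul_add, Finset.sum_add_distrib]

lemma map_smul (hT : IsAvg A T) (c : ℂ) (x : B) : T (c • x) = c • T x := by
  obtain ⟨ι, s, w, v, hw0, hw1, hv, hf⟩ := hT
  simp only [hf, mul_smul_comm, smul_mul_assoc, Finset.smul_sum, smul_comm (_ : ℝ) c]

lemma map_zero (hT : IsAvg A T) : T 0 = 0 := by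
  obtain ⟨ι, s, w, v, hw0, hw1, hv, hf⟩ := hT
  simp [hf]

lemma map_sub (hT : IsAvg A T) (x y : B) : T (x - y) = T x - T y := by
  obtain ⟨ι, s, w, v, hw0, hw1, hv, hf⟩ := hT
  simp only [hf, mul_sub, sub_mul, smul_sub, Finset.sum_sub_distrib]

lemma map_smul_one (hT : IsAvg A T) (c : ℂ) : T (c • 1) = c • 1 := by
  obtain ⟨ι, s, w, v, hw0, hw1, hv, hf⟩ := hT
  have key : ∀ i ∈ s, (v i : B) * (c • 1) * star ((v i : B)) = c • 1 := by
    intro i hi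
    have h1 : (v i : B) * star ((v i : B)) = 1 := by
      have := (Unitary.mem_iff.mp (hv i hi)).2
      rw [← StarMemClass.coe_star, ← MulMemClass.coe_mul, this, OneMemClass.coe_one]
    rw [mul_smul_comm, smul_mul_assoc, mul_one, h1]
  calc T (c • 1) = ∑ i ∈ s, w i • (c • (1 : B)) := by
        rw [hf]; exact Finset.sum_congr rfl fun i hi => by rw [key i hi]
    _ = (∑ i ∈ s, w i) • (c • (1 : B)) := by rw [Finset.sum_smul]
    _ = c • 1 := by rw [hw1, one_smul]

lemma norm_apply_le [Nontrivial B] (hT : IsAvg A T) (x : B) : ‖T x‖ ≤ ‖x‖ := by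
  obtain ⟨ι, s, w, v, hw0, hw1, hv, hf⟩ := hT
  rw [hf]
  calc ‖∑ i ∈ s, w i • ((v i : B) * x * star ((v i : B)))‖
      ≤ ∑ i ∈ s, ‖w i • ((v i : B) * x * star ((v i : B)))‖ := norm_sum_le _ _
    _ ≤ ∑ i ∈ s, w i * ‖x‖ := by
        refine Finset.sum_le_sum fun i hi => ?_
        rw [norm_smul, Real.norm_eq_abs, abs_of_nonneg (hw0 i hi)]
        refine mul_le_mul_of_nonneg_left ?_ (hw0 i hi)
        have hnv : ‖(v i : B)‖ = 1 :=
          CStarRing.norm_of_mem_unitary (coe_mem_unitary (hv i hi))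
        have hnv' : ‖star (v i : B)‖ = 1 := by rw [norm_star, hnv]
        calc ‖(v i : B) * x * star ((v i : B))‖
            ≤ ‖(v i : B) * x‖ * ‖star ((v i : B))‖ := norm_mul_le _ _
          _ ≤ ‖(v i : B)‖ * ‖x‖ * ‖star ((v i : B))‖ := by
              gcongr; exact norm_mul_le _ _
          _ = ‖x‖ := by rw [hnv, hnv', one_mul, mul_one]
    _ = ‖x‖ := by rw [← Finset.sum_mul, hw1, one_mul]

lemma comp (hT : IsAvg A T) (hS : IsAvg A S) : IsAvg A (T ∘ S) := by
  obtain ⟨ι, s, w, v, hw0, hw1, hv, hf⟩ := hT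
  obtain ⟨ι', s', w', v', hw0', hw1', hv', hf'⟩ := hS
  refine ⟨ι × ι', s ×ˢ s', fun p => w p.1 * w' p.2, fun p => v p.1 * v' p.2,
    fun p hp => ?_, ?_, fun p hp => ?_, fun x => ?_⟩
  · rw [Finset.mem_product] at hp
    exact mul_nonneg (hw0 _ hp.1) (hw0' _ hp.2)
  · rw [Finset.sum_product, ← hw1]
    exact Finset.sum_congr rfl fun i hi => by
      simp only [← Finset.mul_sum, hw1', mul_one]
  · rw [Finset.mem_product] at hp
    exact mul_mem (hv _ hp.1) (hv' _ hp.2)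
  · rw [Function.comp_apply, hf, hf']
    rw [Finset.sum_product]
    refine Finset.sum_congr rfl fun i hi => ?_
    rw [Finset.mul_sum, Finset.sum_mul, Finset.smul_sum]
    refine Finset.sum_congr rfl fun j hj => ?_
    simp only [smul_mul_assoc, mul_smul_comm, smul_smul]
    congr 1
    simp only [MulMemClass.coe_mul, StarMemClass.coe_star, star_mul]
    noncomm_ring


lemma sum_mem_convexHull {ι : Type*} {s : Finset ι} {w : ι → ℝ} {z : ι → B}
    (hw0 : ∀ i ∈ s, 0 ≤ w i) (hw1 : ∑ i ∈ s, w i = 1) {t : Set B}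
    (hz : ∀ i ∈ s, z i ∈ t) :
    (∑ i ∈ s, w i • z i) ∈ convexHull ℝ t :=
  (convex_convexHull ℝ t).sum_mem hw0 hw1 fun i hi => subset_convexHull ℝ t (hz i hi)

lemma mem_relC (hT : IsAvg A T) (x : B) : T x ∈ relC A id x := by
  obtain ⟨ι, s, w, v, hw0, hw1, hv, hf⟩ := hT
  rw [hf]
  refine subset_closure (sum_mem_convexHull hw0 hw1 fun i hi => ⟨v i, hv i hi, rfl⟩)

end IsAvg

/-- From membership in the convex hull of a twisted unitary-conjugate set we can
extract finitely many unitaries and convex weights. -/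
lemma exists_avg_data_of_mem_convexHull {f : ↥A → ↥A} {b y : B}
    (hy : y ∈ convexHull ℝ
      {z : B | ∃ v : ↥A, v ∈ unitary ↥A ∧ z = (v : B) * b * star ((f v : ↥A) : B)}) :
    ∃ (ι : Type) (s : Finset ι) (w : ι → ℝ) (v : ι → ↥A),
      (∀ i ∈ s, 0 ≤ w i) ∧ (∑ i ∈ s, w i = 1) ∧ (∀ i ∈ s, v i ∈ unitary ↥A) ∧
      y = ∑ i ∈ s, w i • ((v i : B) * b * star ((f (v i) : ↥A) : B)) := by
  rw [convexHull_eq] at hy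
  obtain ⟨ι, s, w, z, hw0, hw1, hz, hy⟩ := hy
  classical
  have hch : ∀ i, ∃ v : ↥A, i ∈ s → (v ∈ unitary ↥A ∧
      z i = (v : B) * b * star ((f v : ↥A) : B)) := by
    intro i
    by_cases hi : i ∈ s
    · obtain ⟨v, hv, hzv⟩ := hz i hi
      exact ⟨v, fun _ => ⟨hv, hzv⟩⟩
    · exact ⟨1, fun h => absurd h hi⟩
  choose V hV using hch
  refine ⟨ι, s, w, V, hw0, hw1, fun i hi => (hV i hi).1, ?_⟩
  rw [← hy, Finset.centerMass_eq_of_sum_1 _ _ hw1]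
  exact Finset.sum_congr rfl fun i hi => by rw [(hV i hi).2]

section Crossed
variable {Γ : Type*} [Group Γ] (u : Γ →* unitary B) (α : Γ → (↥A ≃⋆ₐ[ℂ] ↥A))

lemma twist_eq
    (hαu : ∀ (t : Γ) (a : ↥A), ((α t a : ↥A) : B) = (u t : B) * (a : B) * star (u t : B))
    (t : Γ) (v a : ↥A) :
    (v : B) * ((a : B) * (u t : B)) * star (v : B) =
      ((v : B) * (a : B) * star ((α t v : ↥A) : B)) * (u t : B) := by
  have h1 : star ((α t v : ↥A) : B) = (u t : B) * star (v : B) * star (u t : B) := by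
    rw [← StarMemClass.coe_star, ← map_star (α t) v, hαu t (star v), StarMemClass.coe_star]
  have h2 : star (u t : B) * (u t : B) = 1 := ((Unitary.mem_iff).mp (u t).2).1
  rw [h1]
  calc (v : B) * ((a : B) * (u t : B)) * star (v : B)
      = (v : B) * (a : B) * ((u t : B) * star (v : B) * (star (u t : B) * (u t : B))) := by
        rw [h2]; noncomm_ring
    _ = ((v : B) * (a : B) * ((u t : B) * star (v : B) * star (u t : B))) * (u t : B) := by
        noncomm_ring

lemma IsAvg.apply_gen {T : B → B} (hT : IsAvg A T)
    (hαu : ∀ (t : Γ) (a : ↥A), ((α t a : ↥A) : B) = (u t : B) * (a : B) * star (u t : B))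
    (a : ↥A) (t : Γ) :
    ∃ b : B, b ∈ A ∧ T ((a : B) * (u t : B)) = b * (u t : B) := by
  obtain ⟨ι, s, w, v, hw0, hw1, hv, hf⟩ := hT
  refine ⟨∑ i ∈ s, w i • ((v i : B) * (a : B) * star ((α t (v i) : ↥A) : B)), ?_, ?_⟩
  · refine sum_mem fun i hi => real_smul_mem ?_ _
    refine mul_mem (mul_mem (v i).2 a.2) ?_
    rw [← StarMemClass.coe_star]
    exact SetLike.coe_mem _
  · rw [hf, Finset.sum_mul]
    refine Finset.sum_congr rfl fun i hi => ?_
    rw [smul_mul_assoc, twist_eq u α hαu t (v i) a]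

/-- Extraction of an averaging operator from (SAveP). -/
lemma exists_avg_small [Nontrivial B]
    (hαu : ∀ (t : Γ) (a : ↥A), ((α t a : ↥A) : B) = (u t : B) * (a : B) * star (u t : B))
    {t : Γ} {b : B} (hb : b ∈ A) (h0 : (0 : B) ∈ relC A (⇑(α t)) b)
    {ε : ℝ} (hε : 0 < ε) :
    ∃ T, IsAvg A T ∧ ‖T (b * (u t : B))‖ < ε := by
  rw [relC, Metric.mem_closure_iff] at h0
  obtain ⟨y, hy, hyd⟩ := h0 ε hε
  obtain ⟨ι, s, w, v, hw0, hw1, hv, rfl⟩ := exists_avg_data_of_mem_convexHull hy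
  refine ⟨_, ⟨ι, s, w, v, hw0, hw1, hv, fun x => rfl⟩, ?_⟩
  have hbv : b = ((⟨b, hb⟩ : ↥A) : B) := rfl
  have key : ∑ i ∈ s, w i • ((v i : B) * (b * (u t : B)) * star ((v i : B))) =
      (∑ i ∈ s, w i • ((v i : B) * b * star ((α t (v i) : ↥A) : B))) * (u t : B) := by
    rw [Finset.sum_mul]
    refine Finset.sum_congr rfl fun i hi => ?_
    rw [smul_mul_assoc, hbv, twist_eq u α hαu t (v i) ⟨b, hb⟩]
  rw [key]
  calc ‖(∑ i ∈ s, w i • ((v i : B) * b * star ((α t (v i) : ↥A) : B))) * (u t : B)‖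
      ≤ ‖∑ i ∈ s, w i • ((v i : B) * b * star ((α t (v i) : ↥A) : B))‖ * ‖(u t : B)‖ :=
        norm_mul_le _ _
    _ < ε := by
        rw [CStarRing.norm_coe_unitary (u t), mul_one]
        simpa [dist_eq_norm] using hyd

end Crossed

/-- Extraction of an averaging operator from the Dixmier property. -/
lemma exists_avg_close {x : B} {c : ℂ} (hc : c • (1 : B) ∈ relC A id x)
    {ε : ℝ} (hε : 0 < ε) :
    ∃ T, IsAvg A T ∧ ‖T x - c • 1‖ < ε := by
  rw [relC, Metric.mem_closure_iff] at hc
  obtain ⟨y, hy, hyd⟩ := hc ε hε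
  obtain ⟨ι, s, w, v, hw0, hw1, hv, rfl⟩ := exists_avg_data_of_mem_convexHull hy
  refine ⟨_, ⟨ι, s, w, v, hw0, hw1, hv, fun z => rfl⟩, ?_⟩
  rw [← dist_eq_norm, dist_comm]
  exact hyd

def GoodAt (A : StarSubalgebra ℂ B) (x : B) : Prop :=
  ∀ T₀, IsAvg A T₀ → ∀ ε : ℝ, 0 < ε → ∃ T, IsAvg A T ∧ ∃ c : ℂ, ‖T (T₀ x) - c • 1‖ < ε

section Good
variable [Nontrivial B] {Γ : Type*} [Group Γ] {u : Γ →* unitary B}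
  {α : Γ → (↥A ≃⋆ₐ[ℂ] ↥A)}

lemma goodAt_gen
    (hαu : ∀ (t : Γ) (a : ↥A), ((α t a : ↥A) : B) = (u t : B) * (a : B) * star (u t : B))
    (hdix : ∀ a ∈ A, ∃ c : ℂ, c • (1 : B) ∈ relC A id a)
    (hsav : ∀ t : Γ, t ≠ 1 → ∀ b ∈ A, (0 : B) ∈ relC A (⇑(α t)) b)
    {a : B} (ha : a ∈ A) (t : Γ) : GoodAt A (a * (u t : B)) := by
  intro T₀ hT₀ ε hε
  obtain ⟨b, hbA, hb⟩ := hT₀.apply_gen u α hαu ⟨a, ha⟩ t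
  by_cases ht : t = 1
  · subst ht
    have hu1 : ((u 1 : unitary B) : B) = 1 := by rw [map_one]; rfl
    obtain ⟨c, hc⟩ := hdix b hbA
    obtain ⟨T₁, hT₁, h⟩ := exists_avg_close hc hε
    refine ⟨T₁, hT₁, c, ?_⟩
    have : T₀ (a * ((u 1 : unitary B) : B)) = b := by
      rw [hb, hu1, mul_one]
    rw [this]
    exact h
  · obtain ⟨T₁, hT₁, h⟩ := exists_avg_small u α hαu hbA (hsav t ht b hbA) hε
    refine ⟨T₁, hT₁, 0, ?_⟩
    rw [zero_smul, sub_zero, hb]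
    exact h

lemma goodAt_zero : GoodAt A 0 := by
  intro T₀ hT₀ ε hε
  exact ⟨id, isAvg_id, 0, by simp [hT₀.map_zero, hε]⟩

lemma goodAt_add {x y : B} (hx : GoodAt A x) (hy : GoodAt A y) : GoodAt A (x + y) := by
  intro T₀ hT₀ ε hε
  obtain ⟨T₁, hT₁, c₁, h₁⟩ := hx T₀ hT₀ (ε / 2) (half_pos hε)
  obtain ⟨T₂, hT₂, c₂, h₂⟩ := hy (T₁ ∘ T₀) (hT₁.comp hT₀) (ε / 2) (half_pos hε)
  refine ⟨T₂ ∘ T₁, hT₂.comp hT₁, c₁ + c₂, ?_⟩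
  have e1 : (T₂ ∘ T₁) (T₀ (x + y)) =
      (T₂ (T₁ (T₀ x)) - T₂ (c₁ • 1)) + (T₂ ((T₁ ∘ T₀) y)) + c₁ • 1 := by
    rw [hT₀.map_add]
    simp only [Function.comp_apply]
    rw [hT₁.map_add, hT₂.map_add, hT₂.map_smul_one]
    abel
  calc ‖(T₂ ∘ T₁) (T₀ (x + y)) - (c₁ + c₂) • 1‖
      = ‖(T₂ (T₁ (T₀ x)) - T₂ (c₁ • 1)) + (T₂ ((T₁ ∘ T₀) y) - c₂ • 1)‖ := by
        rw [e1, add_smul]; congr 1; abel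
    _ ≤ ‖T₂ (T₁ (T₀ x)) - T₂ (c₁ • 1)‖ + ‖T₂ ((T₁ ∘ T₀) y) - c₂ • 1‖ := norm_add_le _ _
    _ ≤ ‖T₁ (T₀ x) - c₁ • 1‖ + ‖T₂ ((T₁ ∘ T₀) y) - c₂ • 1‖ := by
        rw [← hT₂.map_sub]
        exact add_le_add (hT₂.norm_apply_le _) le_rfl
    _ < ε / 2 + ε / 2 := add_lt_add h₁ h₂
    _ = ε := add_halves ε

lemma goodAt_smul {x : B} (c : ℂ) (hx : GoodAt A x) : GoodAt A (c • x) := by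
  intro T₀ hT₀ ε hε
  have hd : 0 < ε / (‖c‖ + 1) := div_pos hε (by positivity)
  obtain ⟨T, hT, c₁, h⟩ := hx T₀ hT₀ _ hd
  refine ⟨T, hT, c * c₁, ?_⟩
  have e1 : T (T₀ (c • x)) = c • T (T₀ x) := by rw [hT₀.map_smul, hT.map_smul]
  rw [e1, mul_smul, ← smul_sub, norm_smul]
  calc ‖c‖ * ‖T (T₀ x) - c₁ • 1‖ ≤ ‖c‖ * (ε / (‖c‖ + 1)) := by
        exact mul_le_mul_of_nonneg_left h.le (norm_nonneg c)
    _ < ε := by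
        rw [mul_div_assoc']
        rw [div_lt_iff₀ (by positivity)]
        nlinarith [norm_nonneg c]

end Good

open Filter Topology in
lemma backward_direction [Nontrivial B] {Γ : Type*} [Group Γ] (u : Γ →* unitary B)
    (α : Γ → (↥A ≃⋆ₐ[ℂ] ↥A))
    (hαu : ∀ (t : Γ) (a : ↥A), ((α t a : ↥A) : B) = (u t : B) * (a : B) * star (u t : B))
    (hdense : Dense (↑(Submodule.span ℂ
      {x : B | ∃ a ∈ A, ∃ t : Γ, x = a * (u t : B)}) : Set B))
    (hdix : ∀ a ∈ A, ∃ c : ℂ, c • (1 : B) ∈ relC A id a)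
    (hsav : ∀ t : Γ, t ≠ 1 → ∀ b ∈ A, (0 : B) ∈ relC A (⇑(α t)) b)
    (x : B) : ∃ c : ℂ, c • (1 : B) ∈ relC A id x := by
  have hgood : ∀ x' ∈ Submodule.span ℂ
      {x : B | ∃ a ∈ A, ∃ t : Γ, x = a * (u t : B)}, GoodAt A x' := by
    intro x' hx'
    refine Submodule.span_induction ?_ goodAt_zero
      (fun p q _ _ hp hq => goodAt_add hp hq) (fun r p _ hp => goodAt_smul r hp) hx'
    rintro z ⟨a, ha, t, rfl⟩
    exact goodAt_gen hαu hdix hsav ha t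
  have key : ∀ ε : ℝ, 0 < ε → ε ≤ 1 →
      ∃ y ∈ relC A id x, ∃ c : ℂ, ‖y - c • 1‖ < ε ∧ ‖c‖ ≤ ‖x‖ + 1 := by
    intro ε hε hε1
    obtain ⟨x', hx'mem, hx'⟩ := Metric.mem_closure_iff.mp (hdense x) (ε / 2) (half_pos hε)
    obtain ⟨T, hT, c, hc⟩ := hgood x' hx'mem id isAvg_id (ε / 2) (half_pos hε)
    have hTc : ‖T x' - c • 1‖ < ε / 2 := hc
    have h1 : ‖T x - T x'‖ ≤ ‖x - x'‖ := by
      rw [← hT.map_sub]; exact hT.norm_apply_le _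
    have h2 : ‖T x - c • 1‖ < ε := by
      calc ‖T x - c • 1‖ ≤ ‖T x - T x'‖ + ‖T x' - c • 1‖ := by
            have := dist_triangle (T x) (T x') (c • 1)
            simpa [dist_eq_norm] using this
        _ < ε / 2 + ε / 2 := by
            refine add_lt_add_of_le_of_lt (h1.trans (le_of_lt ?_)) hTc
            rwa [← dist_eq_norm]
        _ = ε := add_halves ε
    refine ⟨T x, hT.mem_relC x, c, h2, ?_⟩
    have hc1 : ‖c‖ = ‖c • (1 : B)‖ := by rw [norm_smul, norm_one, mul_one]
    calc ‖c‖ = ‖T x - (T x - c • 1)‖ := by rw [hc1]; congr 1; abel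
      _ ≤ ‖T x‖ + ‖T x - c • 1‖ := norm_sub_le _ _
      _ ≤ ‖x‖ + 1 := add_le_add (hT.norm_apply_le x) (h2.le.trans hε1)
  have hseq : ∀ n : ℕ, ∃ y ∈ relC A id x, ∃ c : ℂ,
      ‖y - c • 1‖ < 1 / (n + 1) ∧ ‖c‖ ≤ ‖x‖ + 1 := by
    intro n
    refine key (1 / (n + 1)) (by positivity) ?_
    rw [div_le_one (by positivity)]
    exact le_add_of_nonneg_left (Nat.cast_nonneg n)
  choose y hy c hc1 hc2 using hseq
  obtain ⟨cl, _, φ, hφ, hconv⟩ :=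
    (isCompact_closedBall (0 : ℂ) (‖x‖ + 1)).tendsto_subseq
      (x := c) (fun n => Metric.mem_closedBall.mpr (by simpa [dist_zero_right] using hc2 n))
  refine ⟨cl, ?_⟩
  have hb : Tendsto (fun n => (1 : ℝ) / ((φ n : ℝ) + 1)) atTop (𝓝 0) :=
    tendsto_one_div_add_atTop_nhds_zero_nat.comp hφ.tendsto_atTop
  have h1 : Tendsto (fun n => y (φ n) - c (φ n) • (1 : B)) atTop (𝓝 0) :=
    squeeze_zero_norm (fun n => (hc1 (φ n)).le) hb
  have h2 : Tendsto (fun n => c (φ n) • (1 : B)) atTop (𝓝 (cl • 1)) :=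
    hconv.smul_const 1
  have htend : Tendsto (fun n => y (φ n)) atTop (𝓝 (cl • 1)) := by
    have := h1.add h2
    simpa using this
  have hclosed : IsClosed (relC A id x) := isClosed_closure
  exact hclosed.mem_of_tendsto htend (Eventually.of_forall fun n => hy (φ n))

lemma convex_coe : Convex ℝ (A : Set B) :=
  fun p hp q hq a b _ _ _ => add_mem (real_smul_mem hp a) (real_smul_mem hq b)

lemma forward_saveP {Γ : Type*} [Group Γ] (hA : IsClosed (A : Set B))
    (u : Γ →* unitary B) (α : Γ → (↥A ≃⋆ₐ[ℂ] ↥A))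
    (hαu : ∀ (t : Γ) (a : ↥A), ((α t a : ↥A) : B) = (u t : B) * (a : B) * star (u t : B))
    (E : B →L[ℂ] B)
    (hEe : ∀ a ∈ A, E (a * (u 1 : B)) = a)
    (hEt : ∀ a ∈ A, ∀ t : Γ, t ≠ 1 → E (a * (u t : B)) = 0)
    (H : ∀ x : B, ∃ c : ℂ, c • (1 : B) ∈ relC A id x)
    {t : Γ} (ht : t ≠ 1) {b : B} (hb : b ∈ A) : (0 : B) ∈ relC A (⇑(α t)) b := by
  obtain ⟨c, hc⟩ := H (b * (u t : B))
  set k : B := star ((u t : unitary B) : B) with hkdef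
  have hlin : IsLinearMap ℝ (fun z : B => z * k) :=
    ⟨fun p q => add_mul p q k, fun r p => smul_mul_assoc r p k⟩
  -- push `c • 1` through right multiplication by `k`
  have h2 : c • k ∈ relC A (⇑(α t)) b := by
    have himg : (fun z : B => z * k) (c • (1 : B)) ∈
        closure ((fun z : B => z * k) '' (convexHull ℝ
          {y : B | ∃ v : ↥A, v ∈ unitary ↥A ∧
            y = (v : B) * (b * (u t : B)) * star ((id v : ↥A) : B)})) :=
      image_closure_subset_closure_image (continuous_mul_right k)
        (Set.mem_image_of_mem _ hc)
    rw [hlin.image_convexHull] at himg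
    have hsub : (fun z : B => z * k) ''
        {y : B | ∃ v : ↥A, v ∈ unitary ↥A ∧
          y = (v : B) * (b * (u t : B)) * star ((id v : ↥A) : B)} ⊆
        {y : B | ∃ v : ↥A, v ∈ unitary ↥A ∧
          y = (v : B) * b * star ((α t v : ↥A) : B)} := by
      rintro z ⟨w, ⟨v, hv, rfl⟩, rfl⟩
      refine ⟨v, hv, ?_⟩
      have hbv : b = ((⟨b, hb⟩ : ↥A) : B) := rfl
      have htw := twist_eq u α hαu t v ⟨b, hb⟩
      have huu : ((u t : unitary B) : B) * k = 1 := ((Unitary.mem_iff).mp (u t).2).2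
      calc (v : B) * (b * (u t : B)) * star ((id v : ↥A) : B) * k
          = ((v : B) * b * star ((α t v : ↥A) : B)) * ((u t : B) * k) := by
            rw [show ((id v : ↥A) : B) = (v : B) from rfl, hbv, htw]
            rw [mul_assoc]
        _ = (v : B) * b * star ((α t v : ↥A) : B) := by rw [huu, mul_one]
    have : (fun z : B => z * k) (c • (1 : B)) = c • k := by
      simp [smul_mul_assoc]
    rw [this] at himg
    rw [relC]
    exact closure_mono (convexHull_mono hsub) himg
  -- the set `relC A (α t) b` is contained in `A`
  have hsub2 : relC A (⇑(α t)) b ⊆ (A : Set B) := by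
    rw [relC]
    refine closure_minimal (convexHull_min ?_ convex_coe) hA
    rintro z ⟨v, hv, rfl⟩
    refine mul_mem (mul_mem (v.2) hb) ?_
    rw [← StarMemClass.coe_star]
    exact SetLike.coe_mem _
  -- `E` fixes `A` and kills `k`
  have hu1 : ((u 1 : unitary B) : B) = 1 := by rw [map_one]; rfl
  have hfix : E (c • k) = c • k := by
    have := hEe (c • k) (hsub2 h2)
    rwa [hu1, mul_one] at this
  have hk : k = ((u t⁻¹ : unitary B) : B) := by
    rw [map_inv, ← Unitary.star_eq_inv, Unitary.coe_star]
  have hEk : E k = 0 := by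
    have := hEt 1 (one_mem A) t⁻¹ (inv_ne_one.mpr ht)
    rwa [one_mul, ← hk] at this
  have hzero : c • k = 0 := by
    rw [← hfix, map_smul, hEk, smul_zero]
  rw [← hzero]
  exact h2

end Aux


/-- Corollary 3.3: in the abstract reduced crossed product setup for an action
`α : Γ → Aut(A)`, the inclusion `A ⊆ B` has the relative Dixmier property if and only if
`A` has the Dixmier property and the action `α` has (SAveP). -/
theorem relative_dixmier_iff_dixmier_and_saveP
    {B : Type*} [NormedRing B] [StarRing B] [CStarRing B] [NormedAlgebra ℂ B]
    [CompleteSpace B] [StarModule ℂ B]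
    {Γ : Type*} [Group Γ]
    (A : StarSubalgebra ℂ B) (hA : IsClosed (A : Set B))
    (u : Γ →* unitary B)
    (α : Γ → (↥A ≃⋆ₐ[ℂ] ↥A))
    (hαu : ∀ (t : Γ) (a : ↥A), ((α t a : ↥A) : B) = (u t : B) * (a : B) * star (u t : B))
    (hdense : Dense (↑(Submodule.span ℂ
      {x : B | ∃ a ∈ A, ∃ t : Γ, x = a * (u t : B)}) : Set B))
    (E : B →L[ℂ] B) (hEmem : ∀ x : B, E x ∈ A) (hEnorm : ‖E‖ ≤ 1)
    (hEe : ∀ a ∈ A, E (a * (u 1 : B)) = a)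
    (hEt : ∀ a ∈ A, ∀ t : Γ, t ≠ 1 → E (a * (u t : B)) = 0) :
    (∀ x : B, ∃ c : ℂ, c • (1 : B) ∈ relC A id x) ↔
      ((∀ a ∈ A, ∃ c : ℂ, c • (1 : B) ∈ relC A id a) ∧
        (∀ t : Γ, t ≠ 1 → ∀ b ∈ A, (0 : B) ∈ relC A (⇑(α t)) b)) := by
  constructor
  · intro H
    exact ⟨fun a _ => H a,
      fun t ht b hb => forward_saveP hA u α hαu E hEe hEt H ht hb⟩
  · rintro ⟨hdix, hsav⟩
    rcases subsingleton_or_nontrivial B with hBtriv | hBnt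
    · intro x
      refine ⟨0, ?_⟩
      rw [relC]
      exact subset_closure (subset_convexHull ℝ _ ⟨1, one_mem _, Subsingleton.elim _ _⟩)
    · exact backward_direction u α hαu hdense hdix hsav
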